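/- Let (X,Y) be a pair of nonnegative random variables with (X,Y) equal in distribution to (UV,(1-U)V) for U uniform on (0,1) independent of a nonnegative random variable V, and define I(α) := ∫_0^α E[exp(-γV)] dγ. Then for all α > 0, E[exp(-αX)] = I(α)/α, and for all α ≠ β positive, E[exp(-αX - βY)] = (I(α) - I(β))/(α - β). -/

import Mathlib

open MeasureTheory ProbabilityTheory Real

/-- If `(X,Y)` is equal in distribution to `(UV,(1-U)V)` with `U` uniform on `(0,1)`
independent of the nonnegative random variable `V`, and
`I(α) = ∫_0^α E[exp(-γV)] dγ`, then `E[exp(-αX)] = I(α)/α` for `α > 0`, and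
`E[exp(-αX-βY)] = (I(α)-I(β))/(α-β)` for distinct positive `α, β`. -/
theorem laplace_transforms_of_classK
    {Ω : Type*} [MeasurableSpace Ω] (P : Measure Ω) [IsProbabilityMeasure P]
    (X Y U V : Ω → ℝ) (hXm : Measurable X) (hYm : Measurable Y)
    (hUm : Measurable U) (hVm : Measurable V)
    (hU : Measure.map U P = volume.restrict (Set.Ioo (0 : ℝ) 1))
    (hV : ∀ ω, 0 ≤ V ω)
    (hInd : IndepFun U V P)
    (hdist : Measure.map (fun ω => (X ω, Y ω)) P
      = Measure.map (fun ω => (U ω * V ω, (1 - U ω) * V ω)) P)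
    (I : ℝ → ℝ)
    (hI : ∀ α : ℝ, I α = ∫ γ in (0:ℝ)..α, ∫ ω, Real.exp (-(γ * V ω)) ∂P) :
    (∀ α : ℝ, 0 < α → ∫ ω, Real.exp (-(α * X ω)) ∂P = I α / α) ∧
    (∀ α β : ℝ, 0 < α → 0 < β → α ≠ β →
      ∫ ω, Real.exp (-(α * X ω) - β * Y ω) ∂P = (I α - I β) / (α - β)) := by
  set μV := Measure.map V P with hμV
  have hμVprob : IsProbabilityMeasure μV := Measure.isProbabilityMeasure_map hVm.aemeasurable
  have hμUprob : IsProbabilityMeasure (volume.restrict (Set.Ioo (0 : ℝ) 1)) := by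
    rw [← hU]; exact Measure.isProbabilityMeasure_map hUm.aemeasurable
  set g : ℝ → ℝ := fun γ => ∫ ω, Real.exp (-(γ * V ω)) ∂P with hg
  -- a.e. nonnegativity under μV
  have hVae : ∀ᵐ v ∂μV, 0 ≤ v := by
    rw [hμV]
    exact (ae_map_iff hVm.aemeasurable measurableSet_Ici).2 (ae_of_all _ hV)
  -- g via μV
  have hgeq : ∀ γ : ℝ, g γ = ∫ v, Real.exp (-(γ * v)) ∂μV := by
    intro γ
    rw [hg, hμV, integral_map hVm.aemeasurable]
    exact (Continuous.aestronglyMeasurable (by continuity))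
  -- measurability of g
  have hgm : StronglyMeasurable g := by
    have hc : StronglyMeasurable (fun p : ℝ × Ω => Real.exp (-(p.1 * V p.2))) := by
      exact ((measurable_fst.mul (hVm.comp measurable_snd)).neg.exp).stronglyMeasurable
    exact hc.integral_prod_right'
  -- bound on g for nonnegative arguments
  have hgb : ∀ γ : ℝ, 0 ≤ γ → ‖g γ‖ ≤ 1 := by
    intro γ hγ
    rw [hgeq]
    calc ‖∫ v, Real.exp (-(γ * v)) ∂μV‖
        ≤ 1 * (μV Set.univ).toReal := by
          refine norm_integral_le_of_norm_le_const ?_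
          filter_upwards [hVae] with v hv
          rw [Real.norm_eq_abs, abs_of_pos (Real.exp_pos _)]
          exact Real.exp_le_one_iff.2 (by nlinarith)
      _ = 1 := by simp
  -- interval integrability of g between nonnegative bounds
  have hgint : ∀ a b : ℝ, 0 ≤ a → 0 ≤ b → IntervalIntegrable g volume a b := by
    intro a b ha hb
    rw [intervalIntegrable_iff]
    haveI : IsFiniteMeasure (volume.restrict (Set.uIoc a b)) :=
      ⟨by rw [Measure.restrict_apply_univ, Set.uIoc]; simp [Real.volume_Ioc]⟩
    refine Integrable.mono' (integrable_const 1) hgm.aestronglyMeasurable.restrict ?_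
    filter_upwards [ae_restrict_mem measurableSet_uIoc] with γ hγ
    exact hgb γ (le_of_lt (lt_of_le_of_lt (le_min ha hb) hγ.1))
  -- main computation
  have key : ∀ a b : ℝ, 0 ≤ a → 0 ≤ b →
      ∫ ω, Real.exp (-(a * X ω) - b * Y ω) ∂P
        = ∫ u in Set.Ioo (0:ℝ) 1, g ((a - b) * u + b) := by
    intro a b ha hb
    have hf : Continuous (fun p : ℝ × ℝ => Real.exp (-(a * p.1) - b * p.2)) := by
      continuity
    have h1 : ∫ ω, Real.exp (-(a * X ω) - b * Y ω) ∂P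
        = ∫ p : ℝ × ℝ, Real.exp (-(a * p.1) - b * p.2)
            ∂(Measure.map (fun ω => (X ω, Y ω)) P) := by
      rw [integral_map (hXm.prodMk hYm).aemeasurable hf.aestronglyMeasurable]
    have h2 : ∫ p : ℝ × ℝ, Real.exp (-(a * p.1) - b * p.2)
          ∂(Measure.map (fun ω => (U ω * V ω, (1 - U ω) * V ω)) P)
        = ∫ ω, Real.exp (-(a * (U ω * V ω)) - b * ((1 - U ω) * V ω)) ∂P := by
      rw [integral_map (show Measurable (fun ω => (U ω * V ω, (1 - U ω) * V ω)) from
        (hUm.mul hVm).prodMk ((measurable_const.sub hUm).mul hVm)).aemeasurable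
        hf.aestronglyMeasurable]
    set F : ℝ × ℝ → ℝ := fun p => Real.exp (-(a * (p.1 * p.2)) - b * ((1 - p.1) * p.2))
      with hF
    have hFc : Continuous F := by
      apply Real.continuous_exp.comp; fun_prop
    have h3 : ∫ ω, Real.exp (-(a * (U ω * V ω)) - b * ((1 - U ω) * V ω)) ∂P
        = ∫ p, F p ∂((volume.restrict (Set.Ioo (0:ℝ) 1)).prod μV) := by
      rw [← hU,
        ← (indepFun_iff_map_prod_eq_prod_map_map hUm.aemeasurable hVm.aemeasurable).1 hInd,
        integral_map (hUm.prodMk hVm).aemeasurable hFc.aestronglyMeasurable]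
    -- a.e. bound on F
    have hSae : ∀ᵐ p ∂((volume.restrict (Set.Ioo (0:ℝ) 1)).prod μV),
        p.1 ∈ Set.Ioo (0:ℝ) 1 ∧ 0 ≤ p.2 := by
      rw [Measure.ae_prod_iff_ae_ae]
      · filter_upwards [ae_restrict_mem measurableSet_Ioo] with u hu
        filter_upwards [hVae] with v hv
        exact ⟨hu, hv⟩
      · exact (measurable_fst measurableSet_Ioo).inter (measurable_snd measurableSet_Ici)
    have hFint : Integrable F ((volume.restrict (Set.Ioo (0:ℝ) 1)).prod μV) := by
      refine Integrable.mono' (integrable_const 1) hFc.aestronglyMeasurable ?_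
      filter_upwards [hSae] with p hp
      rw [Real.norm_eq_abs, abs_of_pos (Real.exp_pos _)]
      refine Real.exp_le_one_iff.2 ?_
      obtain ⟨⟨h01, h11⟩, h2⟩ := hp
      nlinarith [mul_nonneg ha (mul_nonneg h01.le h2),
        mul_nonneg hb (mul_nonneg (by linarith : (0:ℝ) ≤ 1 - p.1) h2)]
    have h4 : ∫ p, F p ∂((volume.restrict (Set.Ioo (0:ℝ) 1)).prod μV)
        = ∫ u in Set.Ioo (0:ℝ) 1, ∫ v, F (u, v) ∂μV := integral_prod F hFint
    have h5 : ∀ u : ℝ, ∫ v, F (u, v) ∂μV = g ((a - b) * u + b) := by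
      intro u
      rw [hgeq]
      congr 1
      funext v
      rw [hF]
      ring_nf
    rw [h1, hdist, h2, h3, h4]
    exact setIntegral_congr_fun measurableSet_Ioo (fun u _ => h5 u)
  -- transfer the Ioo integral to an interval integral and substitute
  have key2 : ∀ a b : ℝ, 0 ≤ a → 0 ≤ b → a ≠ b →
      ∫ ω, Real.exp (-(a * X ω) - b * Y ω) ∂P
        = (a - b)⁻¹ * ∫ γ in b..a, g γ := by
    intro a b ha hb hab
    rw [key a b ha hb, ← integral_Ioc_eq_integral_Ioo,
      ← intervalIntegral.integral_of_le (zero_le_one),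
      intervalIntegral.integral_comp_mul_add g (sub_ne_zero.2 hab) b]
    simp [smul_eq_mul]
  constructor
  · intro α hα
    have h0 : ∫ ω, Real.exp (-(α * X ω)) ∂P = ∫ ω, Real.exp (-(α * X ω) - 0 * Y ω) ∂P := by
      simp
    rw [h0, key2 α 0 hα.le le_rfl hα.ne', hI α]
    simp [div_eq_inv_mul]
  · intro α β hα hβ hab
    rw [key2 α β hα.le hβ.le hab, hI α, hI β,
      ← intervalIntegral.integral_interval_sub_left (hgint 0 α le_rfl hα.le)
        (hgint 0 β le_rfl hβ.le)]
    rw [div_eq_inv_mul]
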